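/- For 0 < s < 1 and q = e^{-s}, the probability that no k consecutive events among C_1, C_2, … all fail equals G_k(q)/G(q), where G_k is the generating function of partitions with no k-sequence and G is the generating function of all partitions. -/

import Mathlib

open MeasureTheory ProbabilityTheory
open scoped ENNReal
open Set Filter Topology

section AuxHLR

def insertPiEquiv (a : ℕ) (s : Finset ℕ) (ha : a ∉ s) :
    (ℕ × ({x // x ∈ s} → ℕ)) ≃ ({x // x ∈ insert a s} → ℕ) where
  toFun p b := if hb : b.1 ∈ s then p.2 ⟨b.1, hb⟩ else p.1
  invFun f := (f ⟨a, Finset.mem_insert_self a s⟩,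
    fun b => f ⟨b.1, Finset.mem_insert_of_mem b.2⟩)
  left_inv p := by
    ext
    · simp [ha]
    · simp
  right_inv f := by
    funext b
    rcases Finset.mem_insert.1 b.2 with h | h
    · have : b = ⟨a, Finset.mem_insert_self a s⟩ := Subtype.ext h
      simp [this, ha]
    · simp [h]

lemma tsum_pi_prod (g : ℕ → ℕ → ℝ≥0∞) (s : Finset ℕ) :
    ∑' f : ({x // x ∈ s} → ℕ), ∏ b ∈ s.attach, g b.1 (f b) = ∏ b ∈ s, ∑' m, g b m := by
  classical
  induction s using Finset.induction with
  | empty =>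
    rw [Finset.prod_empty, tsum_eq_single default
      (by intro f hf; exact absurd (Subsingleton.elim f default) hf),
      Finset.attach_empty, Finset.prod_empty]
  | @insert a s ha ih =>
    rw [← Equiv.tsum_eq (insertPiEquiv a s ha), ENNReal.tsum_prod']
    have key : ∀ (m : ℕ) (f : {x // x ∈ s} → ℕ),
        ∏ b ∈ (insert a s).attach, g b.1 ((insertPiEquiv a s ha) (m, f) b)
          = g a m * ∏ b ∈ s.attach, g b.1 (f b) := by
      intro m f
      rw [Finset.attach_insert, Finset.prod_insert, Finset.prod_image]
      · congr 1
        · simp [insertPiEquiv, ha]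
        · refine Finset.prod_congr rfl fun x _ => ?_
          simp [insertPiEquiv, x.2]
      · intro x _ y _ h
        exact Subtype.ext (Subtype.mk_eq_mk.mp h)
      · simp only [Finset.mem_image, not_exists]
        rintro ⟨x, hx⟩ h
        exact ha ((show x = a from Subtype.mk_eq_mk.mp h.2) ▸ hx)
    simp only [key]
    calc ∑' (m : ℕ) (f : { x // x ∈ s } → ℕ), g a m * ∏ b ∈ s.attach, g (↑b) (f b)
        = ∑' (m : ℕ), g a m * ∑' (f : { x // x ∈ s } → ℕ), ∏ b ∈ s.attach, g (↑b) (f b) :=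
          tsum_congr fun m => ENNReal.tsum_mul_left
      _ = (∑' (m : ℕ), g a m) * ∑' (f : { x // x ∈ s } → ℕ), ∏ b ∈ s.attach, g (↑b) (f b) :=
          ENNReal.tsum_mul_right
      _ = ∏ b ∈ insert a s, ∑' (m : ℕ), g b m := by rw [Finset.prod_insert ha, ih]


def Mof (B : Finset ℕ) (f : {x // x ∈ B} → ℕ) : Multiset ℕ :=
  ∑ b ∈ B.attach, Multiset.replicate (f b + 1) b.1

lemma Mof_count (B : Finset ℕ) (f : {x // x ∈ B} → ℕ) (a : ℕ) :
    (Mof B f).count a = if h : a ∈ B then f ⟨a, h⟩ + 1 else 0 := by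
  classical
  rw [Mof, Multiset.count_sum']
  by_cases h : a ∈ B
  · rw [dif_pos h, Finset.sum_eq_single (⟨a, h⟩ : {x // x ∈ B})]
    · rw [Multiset.count_replicate, if_pos rfl]
    · intro b _ hb
      rw [Multiset.count_replicate, if_neg fun hba => hb (Subtype.ext hba)]
    · intro h'; exact absurd (B.mem_attach ⟨a, h⟩) h'
  · rw [dif_neg h]
    refine Finset.sum_eq_zero fun b _ => ?_
    rw [Multiset.count_replicate, if_neg fun (hba : (b : ℕ) = a) => h (hba ▸ b.2)]

lemma Mof_mem (B : Finset ℕ) (f : {x // x ∈ B} → ℕ) (a : ℕ) :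
    a ∈ Mof B f ↔ a ∈ B := by
  rw [← Multiset.count_pos, Mof_count]
  by_cases h : a ∈ B
  · simp [h]
  · simp [h]

lemma Mof_toFinset (B : Finset ℕ) (f : {x // x ∈ B} → ℕ) :
    (Mof B f).toFinset = B :=
  Finset.ext fun a => by rw [Multiset.mem_toFinset, Mof_mem]

lemma Mof_sum (B : Finset ℕ) (f : {x // x ∈ B} → ℕ) :
    (Mof B f).sum = ∑ b ∈ B.attach, (f b + 1) * b.1 := by
  rw [Mof]
  rw [← Multiset.coe_sumAddMonoidHom, map_sum]
  refine Finset.sum_congr rfl fun b _ => ?_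
  simp [Multiset.coe_sumAddMonoidHom, Multiset.sum_replicate, smul_eq_mul]
  ring

def Phi (cond : Finset ℕ → Prop) :
    (Σ B : {B : Finset ℕ // (∀ b ∈ B, 1 ≤ b) ∧ cond B}, ({x // x ∈ B.1} → ℕ)) →
      (Σ n : ℕ, {p : Nat.Partition n // cond p.parts.toFinset}) :=
  fun y => ⟨(Mof y.1.1 y.2).sum,
    ⟨⟨Mof y.1.1 y.2, fun hi => Nat.lt_of_lt_of_le Nat.zero_lt_one
        (y.1.2.1 _ ((Mof_mem _ _ _).1 hi)), rfl⟩,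
      by show cond (Mof y.1.1 y.2).toFinset; rw [Mof_toFinset]; exact y.1.2.2⟩⟩

lemma sigma_mk_eq (cond : Finset ℕ → Prop) {M1 M2 : Multiset ℕ} (h : M1 = M2)
    (hpos1 : ∀ {i}, i ∈ M1 → 0 < i) (hpos2 : ∀ {i}, i ∈ M2 → 0 < i)
    (hc1 : cond (Nat.Partition.mk M1 hpos1 rfl).parts.toFinset)
    (hc2 : cond (Nat.Partition.mk M2 hpos2 rfl).parts.toFinset) :
    (⟨M1.sum, ⟨⟨M1, hpos1, rfl⟩, hc1⟩⟩ :
        Σ n : ℕ, {p : Nat.Partition n // cond p.parts.toFinset}) =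
      ⟨M2.sum, ⟨⟨M2, hpos2, rfl⟩, hc2⟩⟩ := by
  subst h; rfl

lemma Phi_bijective (cond : Finset ℕ → Prop) : Function.Bijective (Phi cond) := by
  constructor
  · rintro ⟨⟨B1, h1⟩, f1⟩ ⟨⟨B2, h2⟩, f2⟩ h
    have hM : Mof B1 f1 = Mof B2 f2 :=
      congrArg (fun z : (Σ n : ℕ, {p : Nat.Partition n // cond p.parts.toFinset}) =>
        z.2.1.parts) h
    have hB : B1 = B2 := by rw [← Mof_toFinset B1 f1, ← Mof_toFinset B2 f2, hM]
    subst hB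
    have hf : f1 = f2 := by
      funext b
      have hc := congrArg (fun M => M.count b.1) hM
      simp only [Mof_count, b.2, dif_pos] at hc
      exact Nat.add_right_cancel hc
    subst hf
    rfl
  · rintro ⟨n, ⟨⟨parts, hpos, hsum⟩, hp⟩⟩
    subst hsum
    refine ⟨⟨⟨parts.toFinset, ⟨fun b hb => hpos (Multiset.mem_toFinset.1 hb), hp⟩⟩,
      fun b => parts.count b.1 - 1⟩, ?_⟩
    have hM : Mof parts.toFinset (fun b => parts.count b.1 - 1) = parts := by
      ext a
      rw [Mof_count]
      by_cases h : a ∈ parts.toFinset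
      · rw [dif_pos h]
        have h1 : 1 ≤ parts.count a := Multiset.one_le_count_iff_mem.2 (Multiset.mem_toFinset.1 h)
        show parts.count a - 1 + 1 = parts.count a
        omega
      · rw [dif_neg h]
        exact (Multiset.count_eq_zero.2 fun ha => h (Multiset.mem_toFinset.2 ha)).symm
    exact sigma_mk_eq cond hM
      (fun hi => hpos (Multiset.mem_toFinset.1 ((Mof_mem _ _ _).1 hi)))
      (fun hi => hpos hi)
      (by show cond (Mof _ _).toFinset; rw [Mof_toFinset]; exact hp) hp


lemma partition_tsum (Q : ℝ≥0∞) (cond : Finset ℕ → Prop) :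
    ∑' n : ℕ, (Nat.card {p : Nat.Partition n // cond p.parts.toFinset} : ℝ≥0∞) * Q ^ n
      = ∑' B : {B : Finset ℕ // (∀ b ∈ B, 1 ≤ b) ∧ cond B},
          ∏ b ∈ B.1, (Q ^ b * (1 - Q ^ b)⁻¹) := by
  have hgeo : ∀ b : ℕ, (∑' m : ℕ, Q ^ (b * (m + 1))) = Q ^ b * (1 - Q ^ b)⁻¹ := by
    intro b
    rw [← ENNReal.tsum_geometric_add_one]
    exact tsum_congr fun m => by rw [pow_mul]
  calc ∑' n : ℕ, (Nat.card {p : Nat.Partition n // cond p.parts.toFinset} : ℝ≥0∞) * Q ^ n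
      = ∑' (n : ℕ) (_p : {p : Nat.Partition n // cond p.parts.toFinset}), Q ^ n := by
        refine tsum_congr fun n => ?_
        haveI : Fintype {p : Nat.Partition n // cond p.parts.toFinset} := Fintype.ofFinite _
        rw [tsum_fintype, Finset.sum_const, Nat.card_eq_fintype_card, nsmul_eq_mul,
          Finset.card_univ]
    _ = ∑' x : Σ n : ℕ, {p : Nat.Partition n // cond p.parts.toFinset}, Q ^ x.1 :=
        (ENNReal.tsum_sigma'
          (fun x : Σ n : ℕ, {p : Nat.Partition n // cond p.parts.toFinset} => Q ^ x.1)).symm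
    _ = ∑' y : (Σ B : {B : Finset ℕ // (∀ b ∈ B, 1 ≤ b) ∧ cond B}, ({x // x ∈ B.1} → ℕ)),
          Q ^ (Phi cond y).1 :=
        (Equiv.tsum_eq (Equiv.ofBijective (Phi cond) (Phi_bijective cond)) _).symm
    _ = ∑' (B : {B : Finset ℕ // (∀ b ∈ B, 1 ≤ b) ∧ cond B}) (f : {x // x ∈ B.1} → ℕ),
          ∏ b ∈ B.1.attach, Q ^ ((b : ℕ) * (f b + 1)) := by
        rw [ENNReal.tsum_sigma'
          (fun y : (Σ B : {B : Finset ℕ // (∀ b ∈ B, 1 ≤ b) ∧ cond B}, ({x // x ∈ B.1} → ℕ)) =>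
            Q ^ (Phi cond y).1)]
        refine tsum_congr fun B => tsum_congr fun f => ?_
        show Q ^ (Mof B.1 f).sum = _
        rw [Mof_sum, Finset.prod_pow_eq_pow_sum]
        congr 1
        exact Finset.sum_congr rfl fun b _ => mul_comm _ _
    _ = ∑' B : {B : Finset ℕ // (∀ b ∈ B, 1 ≤ b) ∧ cond B},
          ∏ b ∈ B.1, ∑' m : ℕ, Q ^ (b * (m + 1)) :=
        tsum_congr fun B => tsum_pi_prod (fun b m => Q ^ (b * (m + 1))) B.1
    _ = ∑' B : {B : Finset ℕ // (∀ b ∈ B, 1 ≤ b) ∧ cond B},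
          ∏ b ∈ B.1, (Q ^ b * (1 - Q ^ b)⁻¹) :=
        tsum_congr fun B => Finset.prod_congr rfl fun b _ => hgeo b


variable {Ω : Type*} [MeasurableSpace Ω] {μ : Measure Ω} {C : ℕ → Set Ω}

lemma meas_dichotomy (hindep : iIndepSet C μ)
    (T : Finset ℕ) (g : ℕ → Set Ω) (hg : ∀ i ∈ T, g i = C i ∨ g i = (C i)ᶜ) :
    μ (⋂ i ∈ T, g i) = ∏ i ∈ T, μ (g i) := by
  have h := (iIndepSet_iff_iIndep C μ).1 hindep
  refine h.meas_biInter fun i hi => ?_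
  have hCi : MeasurableSet[MeasurableSpace.generateFrom {C i}] (C i) :=
    MeasurableSpace.measurableSet_generateFrom rfl
  rcases hg i hi with h' | h' <;> rw [h']
  · exact hCi
  · exact hCi.compl

lemma finset_biInter_union (s t : Finset ℕ) (f : ℕ → Set Ω) :
    ⋂ i ∈ s ∪ t, f i = (⋂ i ∈ s, f i) ∩ ⋂ i ∈ t, f i := by
  rw [← Finset.set_biInter_coe, Finset.coe_union, Set.biInter_union,
    Finset.set_biInter_coe, Finset.set_biInter_coe]

lemma meas_inter_tail [IsProbabilityMeasure μ] (hindep : iIndepSet C μ)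
    (hmeas : ∀ n, MeasurableSet (C n))
    (B : Finset ℕ) (g : ℕ → Set Ω) (hg : ∀ b ∈ B, g b = C b ∨ g b = (C b)ᶜ) :
    μ ((⋂ b ∈ B, g b) ∩ ⋂ n ∈ {n : ℕ | 1 ≤ n ∧ n ∉ B}, C n)
      = (∏ b ∈ B, μ (g b)) * μ (⋂ n ∈ {n : ℕ | 1 ≤ n ∧ n ∉ B}, C n) := by
  classical
  set X := ⋂ b ∈ B, g b with hX
  have hgmeas : ∀ b ∈ B, MeasurableSet (g b) := fun b hb => by
    rcases hg b hb with h | h <;> rw [h]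
    exacts [hmeas b, (hmeas b).compl]
  have hXmeas : MeasurableSet X :=
    MeasurableSet.biInter B.countable_toSet fun b hb => hgmeas b hb
  set F : ℕ → Finset ℕ := fun N => (Finset.range N).filter (fun n => 1 ≤ n ∧ n ∉ B) with hF
  set EN : ℕ → Set Ω := fun N => ⋂ n ∈ F N, C n with hEN
  have hENmeas : ∀ N, MeasurableSet (EN N) := fun N =>
    MeasurableSet.biInter (F N).countable_toSet fun n _ => hmeas n
  have hFmono : ∀ {M N : ℕ}, M ≤ N → F M ⊆ F N := by
    intro M N h n hn
    simp only [hF, Finset.mem_filter, Finset.mem_range] at hn ⊢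
    exact ⟨hn.1.trans_le h, hn.2⟩
  have hENanti : Antitone EN := fun M N h =>
    biInter_subset_biInter_left fun n hn => hFmono h hn
  have hEeq : (⋂ n ∈ {n : ℕ | 1 ≤ n ∧ n ∉ B}, C n) = ⋂ N, EN N := by
    ext ω
    simp only [mem_iInter, mem_setOf_eq, hEN, hF, Finset.mem_filter, Finset.mem_range]
    constructor
    · rintro h N n ⟨-, h1, hB⟩
      exact h n ⟨h1, hB⟩
    · rintro h n ⟨h1, hB⟩
      exact h (n + 1) n ⟨Nat.lt_succ_self n, h1, hB⟩
  have key : ∀ N, μ (X ∩ EN N) = (∏ b ∈ B, μ (g b)) * μ (EN N) := by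
    intro N
    have hdisj : Disjoint B (F N) := by
      rw [Finset.disjoint_left]
      intro n hn hn'
      simp only [hF, Finset.mem_filter] at hn'
      exact hn'.2.2 hn
    set h : ℕ → Set Ω := fun n => if n ∈ B then g n else C n with hh
    have hBeq : (⋂ n ∈ B, h n) = X := by
      exact iInter₂_congr fun n hn => if_pos hn
    have hFeq : (⋂ n ∈ F N, h n) = EN N := by
      refine iInter₂_congr fun n hn => if_neg ?_
      simp only [hF, Finset.mem_filter] at hn
      exact hn.2.2
    have h1 : X ∩ EN N = ⋂ n ∈ B ∪ F N, h n := by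
      rw [finset_biInter_union, hBeq, hFeq]
    have h2 : ∀ i ∈ B ∪ F N, h i = C i ∨ h i = (C i)ᶜ := by
      intro i _
      by_cases hi : i ∈ B
      · rw [show h i = g i from if_pos hi]; exact hg i hi
      · rw [show h i = C i from if_neg hi]; exact Or.inl rfl
    rw [h1, meas_dichotomy hindep _ h h2, Finset.prod_union hdisj]
    congr 1
    · exact Finset.prod_congr rfl fun b hb => by rw [show h b = g b from if_pos hb]
    · rw [← hFeq, meas_dichotomy hindep _ h fun i hi => h2 i (Finset.mem_union_right _ hi)]
  have hprodne : (∏ b ∈ B, μ (g b)) ≠ ∞ :=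
    (ENNReal.prod_lt_top fun b _ => measure_lt_top μ _).ne
  have t1 : Tendsto (fun N => μ (X ∩ EN N)) atTop (𝓝 (μ (⋂ N, X ∩ EN N))) :=
    tendsto_measure_iInter_atTop
      (fun N => (hXmeas.inter (hENmeas N)).nullMeasurableSet)
      (fun M N h => inter_subset_inter_right _ (hENanti h)) ⟨0, measure_ne_top μ _⟩
  have t2 : Tendsto (fun N => μ (EN N)) atTop (𝓝 (μ (⋂ N, EN N))) :=
    tendsto_measure_iInter_atTop (fun N => (hENmeas N).nullMeasurableSet)
      hENanti ⟨0, measure_ne_top μ _⟩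
  have t2' : Tendsto (fun N => (∏ b ∈ B, μ (g b)) * μ (EN N)) atTop
      (𝓝 ((∏ b ∈ B, μ (g b)) * μ (⋂ N, EN N))) :=
    ENNReal.Tendsto.const_mul t2 (Or.inr hprodne)
  have hiI : (⋂ N, X ∩ EN N) = X ∩ ⋂ N, EN N := (inter_iInter _ _).symm
  rw [hEeq, ← hiI]
  refine tendsto_nhds_unique ?_ t2'
  have : (fun N => μ (X ∩ EN N)) = fun N => (∏ b ∈ B, μ (g b)) * μ (EN N) := funext key
  rw [← this]
  exact t1

end AuxHLR

/-- The number of partitions of `n` with no `k` parts of consecutive sizes. -/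
noncomputable def noKSeqPartitions (k n : ℕ) : ℕ :=
  Nat.card {p : Nat.Partition n // ∀ j : ℕ, 1 ≤ j → ∃ i < k, (j + i) ∉ p.parts}

/-- For `0 < s < 1` and `q = e^{-s}`: if `C₁, C₂, …` are independent events with
`P(Cₙ) = 1 - e^{-ns}`, then the probability that there is no run of `k` consecutive
events among the `Cₙ` that all fail equals `G_k(q)/G(q)`, where `G_k` is the
generating function of partitions with no `k`-sequence and `G` that of all partitions. -/
theorem stmt_11 {Ω : Type*} [MeasurableSpace Ω] (μ : Measure Ω) [IsProbabilityMeasure μ]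
    (k : ℕ) (hk : 2 ≤ k) (s : ℝ) (hs0 : 0 < s) (hs1 : s < 1)
    (C : ℕ → Set Ω) (hmeas : ∀ n, MeasurableSet (C n))
    (hindep : iIndepSet C μ)
    (hprob : ∀ n : ℕ, 1 ≤ n → μ (C n) = ENNReal.ofReal (1 - Real.exp (-(n : ℝ) * s))) :
    μ (⋂ i ∈ {i : ℕ | 1 ≤ i}, ⋃ j ∈ Finset.range k, C (i + j)) =
      ENNReal.ofReal
        ((∑' n : ℕ, (noKSeqPartitions k n : ℝ) * Real.exp (-s) ^ n) /
          (∑' n : ℕ, ((Fintype.card (Nat.Partition n) : ℝ) * Real.exp (-s) ^ n))) := by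
  classical
  set q : ℝ := Real.exp (-s) with hqdef
  have hq0 : 0 < q := Real.exp_pos _
  have hq1 : q < 1 := by
    rw [hqdef]
    exact Real.exp_lt_one_iff.2 (neg_lt_zero.2 hs0)
  have hqn1 : ∀ n : ℕ, 1 ≤ n → q ^ n < 1 := fun n hn =>
    pow_lt_one₀ hq0.le hq1 (by omega)
  set Q : ℝ≥0∞ := ENNReal.ofReal q with hQdef
  -- basic probabilities
  have hCn : ∀ n : ℕ, 1 ≤ n → μ (C n) = ENNReal.ofReal (1 - q ^ n) := by
    intro n hn
    rw [hprob n hn]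
    congr 2
    rw [hqdef, ← Real.exp_nat_mul]
    ring_nf
  have hCcn : ∀ n : ℕ, 1 ≤ n → μ ((C n)ᶜ) = ENNReal.ofReal (q ^ n) := by
    intro n hn
    rw [prob_compl_eq_one_sub (hmeas n), hCn n hn, ← ENNReal.ofReal_one,
      ← ENNReal.ofReal_sub _ (by nlinarith [hqn1 n hn] : (0:ℝ) ≤ 1 - q ^ n)]
    norm_num
  -- Borel–Cantelli
  set Bad : Set Ω := limsup (fun n => (C n)ᶜ) atTop with hBadDef
  have hQlt1 : Q < 1 := by
    rw [hQdef, ← ENNReal.ofReal_one]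
    exact ENNReal.ofReal_lt_ofReal_iff_of_nonneg hq0.le |>.2 hq1
  have hgeosum : (∑' n : ℕ, Q ^ n) ≠ ∞ := by
    rw [ENNReal.tsum_geometric]
    exact ENNReal.inv_ne_top.2 (by simp [tsub_eq_zero_iff_le, not_le, hQlt1])
  have hBad : μ Bad = 0 := by
    refine measure_limsup_atTop_eq_zero (ne_top_of_le_ne_top hgeosum (ENNReal.tsum_le_tsum ?_))
    intro n
    rcases Nat.eq_zero_or_pos n with h0 | h1
    · subst h0; simpa using prob_le_one
    · rw [hCcn n h1, hQdef, ← ENNReal.ofReal_pow hq0.le]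
  have hBadmem : ∀ ω, ω ∉ Bad → ∃ N, ∀ n, N ≤ n → ω ∈ C n := by
    intro ω hω
    rw [hBadDef, mem_limsup_iff_frequently_mem, Filter.not_frequently] at hω
    rcases (Filter.eventually_atTop.1 hω) with ⟨N, hN⟩
    exact ⟨N, fun n hn => not_not.1 (hN n hn)⟩
  -- events determined by failure sets
  set Ev : Finset ℕ → Set Ω := fun B => {ω | ∀ n : ℕ, 1 ≤ n → (ω ∈ C n ↔ n ∉ B)} with hEvDef
  have hEvMeas : ∀ B : Finset ℕ, MeasurableSet (Ev B) := by
    intro B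
    have : Ev B = ⋂ n ∈ {n : ℕ | 1 ≤ n}, (if n ∈ B then (C n)ᶜ else C n) := by
      ext ω
      simp only [hEvDef, mem_iInter, mem_setOf_eq]
      refine forall_congr' fun n => imp_congr_right fun hn => ?_
      by_cases hB : n ∈ B <;> simp [hB]
    rw [this]
    exact MeasurableSet.biInter (to_countable _) fun n _ => by
      by_cases hB : n ∈ B <;> simp [hB, hmeas n, (hmeas n).compl]
  -- the product formula
  set ρ : ℕ → ℝ≥0∞ := fun b => Q ^ b * (1 - Q ^ b)⁻¹ with hρDef
  set v : Finset ℕ → ℝ≥0∞ := fun B => ∏ b ∈ B, ρ b with hvDef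
  set c0 : ℝ≥0∞ := μ (Ev ∅) with hc0Def
  have hofRealSub : ∀ b : ℕ, ENNReal.ofReal (1 - q ^ b) = 1 - Q ^ b := by
    intro b
    rw [ENNReal.ofReal_sub _ (by positivity), ENNReal.ofReal_one, hQdef,
      ENNReal.ofReal_pow hq0.le]
  have hQpow : ∀ b : ℕ, ENNReal.ofReal (q ^ b) = Q ^ b := fun b => by
    rw [hQdef, ENNReal.ofReal_pow hq0.le]
  have hsubne : ∀ b : ℕ, 1 ≤ b → (1 - Q ^ b) ≠ 0 := by
    intro b hb
    rw [← hofRealSub b]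
    simp only [ne_eq, ENNReal.ofReal_eq_zero, not_le]
    linarith [hqn1 b hb]
  have hμEv : ∀ B : Finset ℕ, (∀ b ∈ B, 1 ≤ b) → μ (Ev B) = v B * c0 := by
    intro B hB
    have hEvEq : Ev B = (⋂ b ∈ B, (C b)ᶜ) ∩ ⋂ n ∈ {n : ℕ | 1 ≤ n ∧ n ∉ B}, C n := by
      ext ω
      simp only [hEvDef, mem_setOf_eq, mem_inter_iff, mem_iInter, mem_compl_iff]
      constructor
      · intro h
        refine ⟨fun b hb => fun hc => ((h b (hB b hb)).1 hc) hb, fun n hn => (h n hn.1).2 hn.2⟩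
      · rintro ⟨h1, h2⟩ n hn
        constructor
        · intro hc hnB
          exact h1 n hnB hc
        · intro hnB
          exact h2 n ⟨hn, hnB⟩
    have hEv0Eq : Ev ∅ = (⋂ b ∈ B, C b) ∩ ⋂ n ∈ {n : ℕ | 1 ≤ n ∧ n ∉ B}, C n := by
      ext ω
      simp only [hEvDef, mem_setOf_eq, mem_inter_iff, mem_iInter, Finset.notMem_empty,
        not_false_iff, iff_true]
      constructor
      · intro h
        exact ⟨fun b hb => h b (hB b hb), fun n hn => h n hn.1⟩
      · rintro ⟨h1, h2⟩ n hn
        by_cases hnB : n ∈ B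
        · exact h1 n hnB
        · exact h2 n ⟨hn, hnB⟩
    have h1 : μ (Ev B) = (∏ b ∈ B, μ ((C b)ᶜ)) * μ (⋂ n ∈ {n : ℕ | 1 ≤ n ∧ n ∉ B}, C n) := by
      rw [hEvEq]
      exact meas_inter_tail hindep hmeas B _ fun b _ => Or.inr rfl
    have h2 : c0 = (∏ b ∈ B, μ (C b)) * μ (⋂ n ∈ {n : ℕ | 1 ≤ n ∧ n ∉ B}, C n) := by
      rw [hc0Def, hEv0Eq]
      exact meas_inter_tail hindep hmeas B _ fun b _ => Or.inl rfl
    rw [h1, h2, hvDef, ← mul_assoc]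
    congr 1
    rw [← Finset.prod_mul_distrib]
    refine Finset.prod_congr rfl fun b hb => ?_
    rw [hCcn b (hB b hb), hCn b (hB b hb), hρDef, hQpow b, hofRealSub b, mul_assoc,
      ENNReal.inv_mul_cancel (hsubne b (hB b hb)) (by simp), mul_one]
  -- disjointness
  have hEvDisj : ∀ B B' : Finset ℕ, (∀ b ∈ B, 1 ≤ b) → (∀ b ∈ B', 1 ≤ b) → B ≠ B' →
      Disjoint (Ev B) (Ev B') := by
    intro B B' hB hB' hne
    rw [Set.disjoint_left]
    intro ω hω hω'
    refine hne (Finset.ext fun n => ?_)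
    rcases Nat.eq_zero_or_pos n with h0 | h1
    · subst h0
      constructor
      · intro h; exact absurd (hB 0 h) (by omega)
      · intro h; exact absurd (hB' 0 h) (by omega)
    · have e1 := hω n h1
      have e2 := hω' n h1
      have hBn : n ∈ B ↔ ω ∉ C n :=
        ⟨fun h hc => e1.1 hc h, fun h => by_contra fun h' => h (e1.2 h')⟩
      have hB'n : n ∈ B' ↔ ω ∉ C n :=
        ⟨fun h hc => e2.1 hc h, fun h => by_contra fun h' => h (e2.2 h')⟩
      exact hBn.trans hB'n.symm
  -- generic decomposition
  have hdecomp : ∀ (P : Finset ℕ → Prop) (S : Set Ω),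
      (∀ B : Finset ℕ, (∀ b ∈ B, 1 ≤ b) → P B → Ev B ⊆ S) →
      (∀ ω, ω ∉ Bad → ω ∈ S → ∃ B : Finset ℕ, ((∀ b ∈ B, 1 ≤ b) ∧ P B) ∧ ω ∈ Ev B) →
      μ S = ∑' B : {B : Finset ℕ // (∀ b ∈ B, 1 ≤ b) ∧ P B}, μ (Ev B.1) := by
    intro P S hsub hcov
    have hU : μ S = μ (⋃ B : {B : Finset ℕ // (∀ b ∈ B, 1 ≤ b) ∧ P B}, Ev B.1) := by
      refine le_antisymm ?_ (measure_mono (iUnion_subset fun B => hsub B.1 B.2.1 B.2.2))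
      calc μ S = μ (S \ Bad) := (measure_diff_null hBad).symm
        _ ≤ μ (⋃ B : {B : Finset ℕ // (∀ b ∈ B, 1 ≤ b) ∧ P B}, Ev B.1) := by
            refine measure_mono fun ω hω => ?_
            obtain ⟨B, hB1, hB2⟩ := hcov ω hω.2 hω.1
            exact mem_iUnion.2 ⟨⟨B, hB1⟩, hB2⟩
    rw [hU]
    exact measure_iUnion
      (fun B B' hne => hEvDisj B.1 B'.1 B.2.1 B'.2.1 fun h => hne (Subtype.ext h))
      fun B => hEvMeas B.1
  -- the event A
  set A : Set Ω := ⋂ i ∈ {i : ℕ | 1 ≤ i}, ⋃ j ∈ Finset.range k, C (i + j) with hA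
  have hAmem : ∀ ω, ω ∈ A ↔ ∀ i : ℕ, 1 ≤ i → ∃ j, j < k ∧ ω ∈ C (i + j) := by
    intro ω
    simp only [hA, mem_iInter, mem_iUnion, mem_setOf_eq, Finset.mem_range, exists_prop]
  have hcover : ∀ ω, ω ∉ Bad → ∃ B : Finset ℕ, (∀ b ∈ B, 1 ≤ b) ∧ ω ∈ Ev B ∧
      (ω ∈ A ↔ ∀ j : ℕ, 1 ≤ j → ∃ i < k, (j + i) ∉ B) := by
    intro ω hω
    obtain ⟨N, hN⟩ := hBadmem ω hω
    refine ⟨(Finset.range (N + 1)).filter (fun n => 1 ≤ n ∧ ω ∉ C n), ?_, ?_, ?_⟩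
    · intro b hb
      exact (Finset.mem_filter.1 hb).2.1
    · intro n hn
      constructor
      · intro hc hmem
        exact (Finset.mem_filter.1 hmem).2.2 hc
      · intro hmem
        by_contra hc
        rcases Nat.lt_or_ge n (N + 1) with h | h
        · exact hmem (Finset.mem_filter.2 ⟨Finset.mem_range.2 h, hn, hc⟩)
        · exact hc (hN n (by omega))
    · rw [hAmem]
      constructor
      · intro h j hj
        obtain ⟨i, hik, hC⟩ := h j hj
        exact ⟨i, hik, fun hmem => (Finset.mem_filter.1 hmem).2.2 hC⟩
      · intro h i hi
        obtain ⟨j, hjk, hB⟩ := h i hi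
        refine ⟨j, hjk, ?_⟩
        by_contra hc
        rcases Nat.lt_or_ge (i + j) (N + 1) with hlt | hge
        · exact hB (Finset.mem_filter.2 ⟨Finset.mem_range.2 hlt, by omega, hc⟩)
        · exact hc (hN _ (by omega))
  have hEvsubA : ∀ B : Finset ℕ, (∀ b ∈ B, 1 ≤ b) →
      (∀ j : ℕ, 1 ≤ j → ∃ i < k, (j + i) ∉ B) → Ev B ⊆ A := by
    intro B hB hno ω hω
    rw [hAmem]
    intro i hi
    obtain ⟨j, hjk, hjB⟩ := hno i hi
    exact ⟨j, hjk, (hω (i + j) (by omega)).2 hjB⟩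
  -- apply decomposition
  have hμA : μ A = ∑' B : {B : Finset ℕ // (∀ b ∈ B, 1 ≤ b) ∧
      (∀ j : ℕ, 1 ≤ j → ∃ i < k, (j + i) ∉ B)}, μ (Ev B.1) := by
    refine hdecomp _ A hEvsubA fun ω hω hωA => ?_
    obtain ⟨B, h1, h2, h3⟩ := hcover ω hω
    exact ⟨B, ⟨h1, h3.1 hωA⟩, h2⟩
  have hμuniv : (1 : ℝ≥0∞) = ∑' B : {B : Finset ℕ // (∀ b ∈ B, 1 ≤ b) ∧
      (fun _ : Finset ℕ => True) B}, μ (Ev B.1) := by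
    rw [← measure_univ (μ := μ)]
    refine hdecomp _ univ (fun _ _ _ => subset_univ _) fun ω hω _ => ?_
    obtain ⟨B, h1, h2, _⟩ := hcover ω hω
    exact ⟨B, ⟨h1, trivial⟩, h2⟩
  set NK : ℝ≥0∞ := ∑' B : {B : Finset ℕ // (∀ b ∈ B, 1 ≤ b) ∧
      (∀ j : ℕ, 1 ≤ j → ∃ i < k, (j + i) ∉ B)}, v B.1 with hNKdef
  set DA : ℝ≥0∞ := ∑' B : {B : Finset ℕ // (∀ b ∈ B, 1 ≤ b) ∧
      (fun _ : Finset ℕ => True) B}, v B.1 with hDAdef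
  have hμA' : μ A = NK * c0 := by
    rw [hμA, hNKdef, ← ENNReal.tsum_mul_right]
    exact tsum_congr fun B => hμEv B.1 B.2.1
  have hone : (1 : ℝ≥0∞) = DA * c0 := by
    rw [hμuniv, hDAdef, ← ENNReal.tsum_mul_right]
    exact tsum_congr fun B => hμEv B.1 B.2.1
  have hc0ne : c0 ≠ 0 := fun h => by simp [h] at hone
  have hDAne0 : DA ≠ 0 := fun h => by simp [h] at hone
  have hDAnetop : DA ≠ ∞ := by
    intro h
    rw [h, ENNReal.top_mul hc0ne] at hone
    exact ENNReal.one_ne_top hone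
  have hc0eq : c0 = DA⁻¹ := by
    have h2 := congrArg (fun x => DA⁻¹ * x) hone
    exact (by simpa [← mul_assoc, ENNReal.inv_mul_cancel hDAne0 hDAnetop] using h2 :
      DA⁻¹ = c0).symm
  have hNKle : NK ≤ DA := by
    rw [hNKdef, hDAdef]
    exact Summable.tsum_le_tsum_of_inj (fun B => ⟨B.1, B.2.1, trivial⟩)
      (fun B B' h => Subtype.ext (Subtype.mk_eq_mk.mp h))
      (fun _ _ => zero_le) (fun B => le_rfl) ENNReal.summable ENNReal.summable
  have hNKnetop : NK ≠ ∞ := ne_top_of_le_ne_top hDAnetop hNKle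
  -- partition identities
  have hNKpart : ∑' n : ℕ, (noKSeqPartitions k n : ℝ≥0∞) * Q ^ n = NK := by
    have hp := partition_tsum Q (fun B => ∀ j : ℕ, 1 ≤ j → ∃ i < k, (j + i) ∉ B)
    have hcard : ∀ n : ℕ, (noKSeqPartitions k n : ℝ≥0∞)
        = (Nat.card {p : Nat.Partition n //
            ∀ j : ℕ, 1 ≤ j → ∃ i < k, (j + i) ∉ p.parts.toFinset} : ℝ≥0∞) := by
      intro n
      congr 1
      refine Nat.card_congr (Equiv.subtypeEquivRight fun p => ?_)
      constructor
      · intro h j hj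
        obtain ⟨i, hik, hi⟩ := h j hj
        exact ⟨i, hik, fun hm => hi (Multiset.mem_toFinset.1 hm)⟩
      · intro h j hj
        obtain ⟨i, hik, hi⟩ := h j hj
        exact ⟨i, hik, fun hm => hi (Multiset.mem_toFinset.2 hm)⟩
    calc ∑' n : ℕ, (noKSeqPartitions k n : ℝ≥0∞) * Q ^ n
        = ∑' n : ℕ, (Nat.card {p : Nat.Partition n //
            ∀ j : ℕ, 1 ≤ j → ∃ i < k, (j + i) ∉ p.parts.toFinset} : ℝ≥0∞) * Q ^ n :=
          tsum_congr fun n => by rw [hcard n]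
      _ = NK := by rw [hp, hNKdef]
  have hDApart : ∑' n : ℕ, (Fintype.card (Nat.Partition n) : ℝ≥0∞) * Q ^ n = DA := by
    have hp := partition_tsum Q (fun _ : Finset ℕ => True)
    have hcard : ∀ n : ℕ, (Fintype.card (Nat.Partition n) : ℝ≥0∞)
        = (Nat.card {p : Nat.Partition n // True} : ℝ≥0∞) := by
      intro n
      congr 1
      rw [Nat.card_congr (Equiv.subtypeUnivEquiv fun _ => trivial), Nat.card_eq_fintype_card]
    calc ∑' n : ℕ, (Fintype.card (Nat.Partition n) : ℝ≥0∞) * Q ^ n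
        = ∑' n : ℕ, (Nat.card {p : Nat.Partition n // True} : ℝ≥0∞) * Q ^ n :=
          tsum_congr fun n => by rw [hcard n]
      _ = DA := by rw [hp, hDAdef]
  -- final conversion to reals
  have hterm : ∀ (c n : ℕ), ((c : ℝ≥0∞) * Q ^ n).toReal = (c : ℝ) * q ^ n := by
    intro c n
    rw [ENNReal.toReal_mul, ENNReal.toReal_natCast, ENNReal.toReal_pow, hQdef,
      ENNReal.toReal_ofReal hq0.le]
  have htermne : ∀ (c n : ℕ), ((c : ℝ≥0∞) * Q ^ n) ≠ ∞ :=
    fun c n => ENNReal.mul_ne_top (ENNReal.natCast_ne_top c)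
      (ENNReal.pow_ne_top ENNReal.ofReal_ne_top)
  have hreal1 : (∑' n : ℕ, (noKSeqPartitions k n : ℝ) * q ^ n) = NK.toReal := by
    rw [← hNKpart, ENNReal.tsum_toReal_eq fun n => htermne _ n]
    exact (tsum_congr fun n => (hterm _ n).symm)
  have hreal2 : (∑' n : ℕ, (Fintype.card (Nat.Partition n) : ℝ) * q ^ n) = DA.toReal := by
    rw [← hDApart, ENNReal.tsum_toReal_eq fun n => htermne _ n]
    exact (tsum_congr fun n => (hterm _ n).symm)
  rw [hreal1, hreal2, ENNReal.ofReal_div_of_pos (ENNReal.toReal_pos hDAne0 hDAnetop),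
    ENNReal.ofReal_toReal hNKnetop, ENNReal.ofReal_toReal hDAnetop, hμA', hc0eq,
    div_eq_mul_inv]
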